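/- arXiv:cs/0603034 — 3 statements merged into one kernel-verified Lean document; each statement's English description precedes it below -/
import Mathlib

section
/- For propositional formulas φ and ψ, φ ∧ ψ is logically equivalent to φ ∧ ⋀ NewCons(φ, ψ), where NewCons(φ, ψ) = PI(φ ∧ ψ) \ PI(φ). -/
inductive PForm (α : Type) : Type
  | atom : α → PForm α
  | fls  : PForm α
  | not  : PForm α → PForm α
  | and  : PForm α → PForm α → PForm α
  | or   : PForm α → PForm α → PForm α

namespace PForm

def Sat {α : Type} (v : α → Prop) : PForm α → Prop
  | atom p => v p
  | fls => False
  | not φ => ¬ Sat v φ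
  | and φ ψ => Sat v φ ∧ Sat v ψ
  | or φ ψ => Sat v φ ∨ Sat v ψ

end PForm

/-- A literal is an atom together with a polarity. -/
abbrev Lit (α : Type) := α × Bool

def Lit.Sat {α : Type} (v : α → Prop) (l : Lit α) : Prop :=
  if l.2 then v l.1 else ¬ v l.1

/-- A clause is a (finite) disjunction of literals. -/
abbrev Clause (α : Type) := Finset (Lit α)

def Clause.Sat {α : Type} (v : α → Prop) (c : Clause α) : Prop :=
  ∃ l ∈ c, Lit.Sat v l

def SatAll {α : Type} (v : α → Prop) (Γ : Set (PForm α)) : Prop :=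
  ∀ φ ∈ Γ, PForm.Sat v φ

/-- `χ` is an implicate of the set of formulas `Γ`. -/
def EntailsC {α : Type} (Γ : Set (PForm α)) (c : Clause α) : Prop :=
  ∀ v : α → Prop, SatAll v Γ → Clause.Sat v c

/-- Entailment between clauses. -/
def ClEntails {α : Type} (c c' : Clause α) : Prop :=
  ∀ v : α → Prop, Clause.Sat v c → Clause.Sat v c'

/-- The set of prime implicates of (the conjunction of) `Γ`. -/
def PI {α : Type} (Γ : Set (PForm α)) : Set (Clause α) :=
  {c | EntailsC Γ c ∧ ∀ c' : Clause α, EntailsC Γ c' → ClEntails c' c → ClEntails c c'}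

/-- New consequences of `ψ` w.r.t. `Γ`:  `PI(Γ ∧ ψ) \ PI(Γ)`. -/
def NewCons {α : Type} (Γ : Set (PForm α)) (ψ : PForm α) : Set (Clause α) :=
  PI (Γ ∪ {ψ}) \ PI Γ

open Classical

lemma sat_congr {α : Type} {v v' : α → Prop} (h : ∀ a, v a ↔ v' a) :
    ∀ φ : PForm α, PForm.Sat v φ ↔ PForm.Sat v' φ := by
  intro φ
  induction φ with
  | atom p => exact h p
  | fls => rfl
  | not φ ih => simp [PForm.Sat, ih]
  | and φ χ ih1 ih2 => simp [PForm.Sat, ih1, ih2]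
  | or φ χ ih1 ih2 => simp [PForm.Sat, ih1, ih2]

lemma subset_clEntails {α : Type} {c c' : Clause α} (h : c ⊆ c') : ClEntails c c' := by
  rintro v ⟨l, hl, hs⟩
  exact ⟨l, h hl, hs⟩

/-- Non-tautological clause. -/
def NT {α : Type} (c : Clause α) : Prop :=
  ∀ a : α, ¬ ((a, true) ∈ c ∧ (a, false) ∈ c)

lemma subset_of_clEntails {α : Type} {c' c : Clause α} (hnt : NT c)
    (h : ClEntails c' c) : c' ⊆ c := by
  intro l hl
  by_contra hlc
  -- build a valuation falsifying c but satisfying l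
  set v₀ : α → Prop := fun a => ((a, false) ∈ c) ∨ (a = l.1 ∧ l.2 = true ∧ (a, true) ∉ c)
    with hv₀
  have hlsat : Lit.Sat v₀ l := by
    rcases l with ⟨p, b⟩
    cases b with
    | true =>
      simp only [Lit.Sat, if_pos rfl]
      exact Or.inr ⟨rfl, rfl, hlc⟩
    | false =>
      simp only [Lit.Sat]
      rintro (hf | ⟨_, hb, _⟩)
      · exact hlc hf
      · simp at hb
  have hcnot : ¬ Clause.Sat v₀ c := by
    rintro ⟨⟨a, b⟩, hmem, hsat⟩
    cases b with
    | true =>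
      simp only [Lit.Sat, if_pos rfl] at hsat
      rcases hsat with hf | ⟨_, _, hnotin⟩
      · exact hnt a ⟨hmem, hf⟩
      · exact hnotin hmem
    | false =>
      simp only [Lit.Sat] at hsat
      exact hsat (Or.inl hmem)
  exact hcnot (h v₀ ⟨l, hl, hlsat⟩)

/-- `φ ∧ ψ` is equivalent to `φ ∧ ⋀ NewCons(φ, ψ)`. -/
theorem stmt_1 {α : Type} [Fintype α] (φ ψ : PForm α) :
    ∀ v : α → Prop,
      (PForm.Sat v φ ∧ PForm.Sat v ψ) ↔
      (PForm.Sat v φ ∧ ∀ c ∈ NewCons ({φ} : Set (PForm α)) ψ, Clause.Sat v c) := by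
  intro v
  constructor
  · rintro ⟨hφ, hψ⟩
    refine ⟨hφ, fun c hc => ?_⟩
    rcases hc with ⟨⟨hent, _⟩, _⟩
    apply hent v
    rintro χ (hχ | hχ)
    · simp only [Set.mem_singleton_iff] at hχ; subst hχ; exact hφ
    · simp only [Set.mem_singleton_iff] at hχ; subst hχ; exact hψ
  · rintro ⟨hφ, hnew⟩
    refine ⟨hφ, ?_⟩
    by_contra hψ
    -- the clause falsified exactly by valuations agreeing with v everywhere
    set C : Clause α := Finset.univ.image (fun a => (a, if v a then false else true))
      with hC
    have hCnotsat : ¬ Clause.Sat v C := by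
      rintro ⟨l, hmem, hsat⟩
      rcases Finset.mem_image.mp hmem with ⟨a, -, hfa⟩
      subst hfa
      by_cases hva : v a
      · rw [if_pos hva] at hsat
        simp only [Lit.Sat] at hsat
        simp at hsat
        exact hsat hva
      · rw [if_neg hva] at hsat
        simp only [Lit.Sat] at hsat
        simp at hsat
        exact hva hsat
    have hCnt : NT C := by
      intro a ⟨h1, h2⟩
      rcases Finset.mem_image.mp h1 with ⟨a1, -, hfa1⟩
      rcases Finset.mem_image.mp h2 with ⟨a2, -, hfa2⟩
      have ha1 : a1 = a := congrArg Prod.fst hfa1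
      have ha2 : a2 = a := congrArg Prod.fst hfa2
      have hb1 : (if v a1 then false else true) = true := congrArg Prod.snd hfa1
      have hb2 : (if v a2 then false else true) = false := congrArg Prod.snd hfa2
      rw [ha1] at hb1
      rw [ha2] at hb2
      by_cases hva : v a
      · rw [if_pos hva] at hb1; exact Bool.false_ne_true hb1
      · rw [if_neg hva] at hb2; simp at hb2
    have hCent : EntailsC ({φ} ∪ {ψ}) C := by
      intro v' hv'
      have hψ' : PForm.Sat v' ψ := hv' ψ (Or.inr rfl)
      have : ¬ ∀ a, v' a ↔ v a := by
        intro hall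
        exact hψ ((sat_congr hall ψ).mp hψ')
      push_neg at this
      rcases this with ⟨a, ha⟩
      refine ⟨(a, if v a then false else true), ?_, ?_⟩
      · simp [hC]
      · by_cases hva : v a
        · rw [if_pos hva]
          simp only [Lit.Sat]
          simp only [show ((false : Bool) = true) ↔ False by simp, if_false]
          intro hv'a
          rcases ha with ⟨_, hna⟩ | ⟨hnv', _⟩
          · exact hna hva
          · exact hnv' hv'a
        · rw [if_neg hva]
          simp only [Lit.Sat, if_pos rfl]
          rcases ha with ⟨hv', _⟩ | ⟨_, hva'⟩
          · exact hv'
          · exact absurd hva' hva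
    -- pick a minimal implicate contained in C
    classical
    set Γ' : Set (PForm α) := ({φ} : Set (PForm α)) ∪ {ψ} with hΓ'
    set T : Finset (Clause α) := C.powerset.filter (fun c => EntailsC Γ' c) with hT
    have hCT : C ∈ T := by
      simp [hT, Finset.mem_filter, Finset.mem_powerset]
      exact hCent
    obtain ⟨c, hcT, hmin⟩ := T.exists_min_image Finset.card ⟨C, hCT⟩
    simp only [hT, Finset.mem_filter, Finset.mem_powerset] at hcT
    obtain ⟨hcC, hcent⟩ := hcT
    have hcnt : NT c := by
      intro a ⟨h1, h2⟩
      exact hCnt a ⟨hcC h1, hcC h2⟩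
    -- c is a prime implicate of Γ'
    have hprime : c ∈ PI Γ' := by
      refine ⟨hcent, fun c' hc'ent hc'c => ?_⟩
      have hsub : c' ⊆ c := subset_of_clEntails hcnt hc'c
      have hc'T : c' ∈ T := by
        simp only [hT, Finset.mem_filter, Finset.mem_powerset]
        exact ⟨hsub.trans hcC, hc'ent⟩
      have hle := hmin c' hc'T
      have heq : c' = c := Finset.eq_of_subset_of_card_le hsub hle
      subst heq
      exact fun v' h => h
    -- v falsifies c
    have hvnc : ¬ Clause.Sat v c := fun h => hCnotsat (subset_clEntails hcC v h)
    by_cases hPIφ : c ∈ PI ({φ} : Set (PForm α))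
    · refine hvnc (hPIφ.1 v ?_)
      rintro χ hχ
      simp only [Set.mem_singleton_iff] at hχ
      subst hχ
      exact hφ
    · exact hvnc (hnew c ⟨hprime, hPIφ⟩)
end

section
/- Let S be a set of propositional formulas, C a formula (conjunction of effects), and F a formula (conjunction of frame literals). Then S ∪ {C} ∪ {F} is inconsistent if and only if S ∪ NewCons(S, C) ∪ {F} is inconsistent. -/
lemma sat_ext {α : Type} {v w : α → Prop} (h : ∀ p, v p ↔ w p) :
    ∀ φ : PForm α, PForm.Sat v φ ↔ PForm.Sat w φ := by
  intro φ
  induction φ with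
  | atom p => exact h p
  | fls => exact Iff.rfl
  | not φ ih => exact not_congr ih
  | and φ ψ ih1 ih2 => exact and_congr ih1 ih2
  | or φ ψ ih1 ih2 => exact or_congr ih1 ih2

lemma key_lemma {α : Type} [Fintype α] (S : Set (PForm α)) (C : PForm α)
    (v : α → Prop) (hS : SatAll v S) (hN : ∀ c ∈ NewCons S C, Clause.Sat v c) :
    PForm.Sat v C := by
  by_contra hC
  classical
  set Γ : Set (PForm α) := S ∪ {C} with hΓ
  set cv : Clause α := Finset.univ.image (fun p => (p, if v p then false else true)) with hcv
  have hvcv : ¬ Clause.Sat v cv := by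
    rintro ⟨l, hl, hsat⟩
    simp only [hcv, Finset.mem_image, Finset.mem_univ, true_and] at hl
    obtain ⟨p, rfl⟩ := hl
    by_cases h : v p <;> simp [Lit.Sat, h] at hsat <;> exact hsat h
  have hEcv : EntailsC Γ cv := by
    intro w hw
    have hwC : PForm.Sat w C := hw C (Or.inr rfl)
    have hne : ¬ ∀ p, v p ↔ w p := fun hall => hC ((sat_ext hall C).mpr hwC)
    push_neg at hne
    obtain ⟨p, hp⟩ := hne
    refine ⟨(p, if v p then false else true), ?_, ?_⟩
    · simp [hcv]
    · by_cases h : v p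
      · simp only [h, if_true, Lit.Sat, if_false]
        rcases hp with ⟨_, hw⟩ | ⟨hv, _⟩
        · exact hw
        · exact absurd h hv
      · simp only [h, if_false, Lit.Sat, if_true]
        rcases hp with ⟨hv, _⟩ | ⟨_, hw⟩
        · exact absurd hv h
        · exact hw
  let T : Set (Clause α) := {c | EntailsC Γ c ∧ ¬ Clause.Sat v c}
  have hne : cv ∈ T := ⟨hEcv, hvcv⟩
  let r : Clause α → Clause α → Prop := fun a b => ClEntails a b ∧ ¬ ClEntails b a
  haveI : IsTrans (Clause α) r :=
    ⟨fun a b c hab hbc => ⟨fun u hu => hbc.1 u (hab.1 u hu),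
      fun h => hab.2 (fun u hu => h u (hbc.1 u hu))⟩⟩
  haveI : IsIrrefl (Clause α) r := ⟨fun a ha => ha.2 ha.1⟩
  have hwf : WellFounded r := Finite.wellFounded_of_trans_of_irrefl r
  obtain ⟨m, hmT, hmin⟩ := hwf.has_min T ⟨cv, hne⟩
  have hprime : m ∈ PI Γ := by
    refine ⟨hmT.1, fun c' hc' hce => ?_⟩
    by_contra hnot
    have hc'T : c' ∈ T := ⟨hc', fun hs => hmT.2 (hce v hs)⟩
    exact hmin c' hc'T ⟨hce, hnot⟩
  have hnotPIS : m ∉ PI S := fun h => hmT.2 (h.1 v hS)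
  exact hmT.2 (hN m ⟨hprime, hnotPIS⟩)

/-- Lemma 1: `S ∪ {C} ∪ {F}` is inconsistent iff
`S ∪ NewCons(S, C) ∪ {F}` is inconsistent. -/
theorem stmt_3 {α : Type} [Fintype α] (S : Set (PForm α)) (C F : PForm α) :
    (¬ ∃ v : α → Prop, SatAll v S ∧ PForm.Sat v C ∧ PForm.Sat v F) ↔
    (¬ ∃ v : α → Prop, SatAll v S ∧ (∀ c ∈ NewCons S C, Clause.Sat v c) ∧ PForm.Sat v F) := by
  constructor
  · rintro h ⟨v, hS, hN, hF⟩
    exact h ⟨v, hS, key_lemma S C v hS hN, hF⟩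
  · rintro h ⟨v, hS, hC, hF⟩
    apply h
    refine ⟨v, hS, fun c hc => hc.1.1 v ?_, hF⟩
    rintro φ (hφ | rfl)
    · exact hS φ hφ
    · exact hC
end

section
/- Let χ be a clause in NewCons(S, C) such that S ∪ {φ, φ'} ∪ {⋀_{j∈J} ¬l_j} is consistent and S ∪ {χ} ∪ {⋀_{j∈J} ¬l_j} is inconsistent, where J indexes a set of literals including the negations of all literals of χ. Then S ∪ {χ} is consistent and for every literal l occurring in χ, the negation ¬l appears among the ⋀ restricted to literals of χ; consequently S ∪ {χ} ∪ {⋀_{l∈χ} ¬l} is inconsistent and all literals of χ lie in the designated independent set. -/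
/-- key sub-claim of Lemma 5: let `χ ∈ NewCons(S, C)`; if
`S ∪ {⋀_{l∈L} ¬l}` is consistent, `S ∪ {χ} ∪ {⋀_{l∈χ∩L} ¬l}` is inconsistent,
and `S ∪ {χ}` is consistent, then every literal of `χ` belongs to `L`. -/
theorem stmt_5 {α : Type} [Fintype α] (S : Set (PForm α)) (C : PForm α) (χ : Clause α)
    (L : Set (Lit α))
    (hχ : χ ∈ NewCons S C)
    (h1 : ∃ v : α → Prop, SatAll v S ∧ ∀ l ∈ L, ¬ Lit.Sat v l)
    (h2 : ¬ ∃ v : α → Prop, SatAll v S ∧ Clause.Sat v χ ∧ ∀ l ∈ χ, l ∈ L → ¬ Lit.Sat v l)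
    (h3 : ∃ v : α → Prop, SatAll v S ∧ Clause.Sat v χ) :
    ∀ l ∈ χ, l ∈ L := by
  classical
  obtain ⟨⟨hent, hprime⟩, -⟩ := hχ
  set χ' : Clause α := χ.filter (· ∈ L) with hχ'def
  have hsub : ∀ l ∈ χ', l ∈ χ ∧ l ∈ L := fun l hl => Finset.mem_filter.mp hl
  have hA : EntailsC (S ∪ {C}) χ' := by
    intro v hv
    by_contra hc
    apply h2
    refine ⟨v, fun φ hφ => hv φ (Set.mem_union_left _ hφ), hent v hv, ?_⟩
    intro l hl hlL hsat
    exact hc ⟨l, Finset.mem_filter.mpr ⟨hl, hlL⟩, hsat⟩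
  have hB : ClEntails χ' χ := fun v ⟨l, hl, hs⟩ => ⟨l, (hsub l hl).1, hs⟩
  have hC : ClEntails χ χ' := hprime χ' hA hB
  by_cases htaut : ∃ a : α, (a, true) ∈ χ ∧ (a, false) ∈ χ
  · exfalso
    obtain ⟨a, hp, hn⟩ := htaut
    obtain ⟨v, hvS, hvL⟩ := h1
    apply h2
    refine ⟨v, hvS, ?_, fun l _ hlL => hvL l hlL⟩
    by_cases hva : v a
    · exact ⟨(a, true), hp, by simpa [Lit.Sat] using hva⟩
    · exact ⟨(a, false), hn, by simpa [Lit.Sat] using hva⟩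
  · push_neg at htaut
    rintro ⟨a₀, b₀⟩ hl₀
    by_contra hl₀L
    set v : α → Prop := fun a => (a = a₀ ∧ b₀ = true) ∨ (a ≠ a₀ ∧ (a, false) ∈ χ) with hv
    have hsat₀ : Lit.Sat v (a₀, b₀) := by
      cases b₀ with
      | true => simp [Lit.Sat, hv]
      | false => simp [Lit.Sat, hv]
    obtain ⟨l, hl', hsatl⟩ := hC v ⟨(a₀, b₀), hl₀, hsat₀⟩
    obtain ⟨hlχ, hlL⟩ := hsub l hl'
    obtain ⟨a, b⟩ := l
    by_cases ha : a = a₀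
    · subst ha
      cases b with
      | true =>
        cases b₀ with
        | true => exact hl₀L hlL
        | false =>
          -- Lit.Sat v (a, true) means v a, but v a is false
          simp [Lit.Sat, hv] at hsatl
      | false =>
        cases b₀ with
        | false => exact hl₀L hlL
        | true =>
          exact htaut a hl₀ hlχ
    · cases b with
      | true =>
        have : (a, false) ∈ χ := by
          rcases hsatl with h | h
          · exact absurd h.1 ha
          · exact h.2
        exact htaut a hlχ this
      | false =>
        simp only [Lit.Sat] at hsatl
        exact hsatl (Or.inr ⟨ha, hlχ⟩)
end
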